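/- Let H ∈ (0,1/2), T > 0, and t ∈ (0,T]. Suppose constants γ ∈ (0,H) and β ∈ (0,1/2) satisfy 0 < β < γ and 4H − 6γ − 2β − 1 > −1 together with 2H − 4γ − 2β > 0 and 2H − 2γ > 0. Then ∫_0^t ∫_0^θ ((θ−θ')/(θθ'))^{2γ} θ^{2H−1−2γ} (t−θ)^{2H−1−2γ} |θ−θ'|^{−1−2β} dθ' dθ ≤ C · (Γ(2H−2γ)Γ(2H−4γ−2β)/Γ(4H−6γ−2β)) · t^{4H−6γ−2β−1} < ∞ for some finite constant C = C(H,γ,β) > 0. -/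

import Mathlib

open MeasureTheory

open Set

lemma rpow_lint (u c : ℝ) (hu : -1 < u) (hc : 0 < c) :
    ∫⁻ x in Ioo (0:ℝ) c, ENNReal.ofReal (x ^ u) =
      ENNReal.ofReal (c ^ (u + 1) / (u + 1)) := by
  have hint : IntegrableOn (fun x : ℝ => x ^ u) (Ioo 0 c) := by
    have := (intervalIntegral.intervalIntegrable_rpow' (a := 0) (b := c) hu)
    rw [intervalIntegrable_iff_integrableOn_Ioc_of_le hc.le] at this
    exact this.mono_set Ioo_subset_Ioc_self
  rw [← ofReal_integral_eq_lintegral_ofReal hint]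
  · congr 1
    rw [← MeasureTheory.integral_Ioc_eq_integral_Ioo,
      ← intervalIntegral.integral_of_le hc.le, integral_rpow (Or.inl hu),
      Real.zero_rpow (by linarith)]
    ring
  · filter_upwards [ae_restrict_mem measurableSet_Ioo] with x hx
    exact Real.rpow_nonneg hx.1.le _

lemma rpow_lint_rev (v c : ℝ) (hv : -1 < v) (hc : 0 < c) :
    ∫⁻ x in Ioo (c/2 : ℝ) c, ENNReal.ofReal ((c - x) ^ v) =
      ENNReal.ofReal ((c/2) ^ (v + 1) / (v + 1)) := by
  have hint : IntegrableOn (fun x : ℝ => (c - x) ^ v) (Ioo (c/2) c) := by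
    have h0 := (intervalIntegral.intervalIntegrable_rpow' (a := 0) (b := c/2) hv)
    have := h0.comp_sub_left c
    simp only [sub_zero] at this
    replace this := this.symm
    rw [intervalIntegrable_iff_integrableOn_Ioc_of_le (by linarith)] at this
    have hcc : c - c/2 = c/2 := by ring
    rw [hcc] at this
    exact this.mono_set Ioo_subset_Ioc_self
  rw [← ofReal_integral_eq_lintegral_ofReal hint]
  · congr 1
    rw [← MeasureTheory.integral_Ioc_eq_integral_Ioo,
      ← intervalIntegral.integral_of_le (by linarith : c/2 ≤ c),
      intervalIntegral.integral_comp_sub_left (fun x => x ^ v) c]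
    have h1 : c - c = 0 := by ring
    have h2 : c - c/2 = c/2 := by ring
    rw [h1, h2, integral_rpow (Or.inl hv), Real.zero_rpow (by linarith)]
    ring
  · filter_upwards [ae_restrict_mem measurableSet_Ioo] with x hx
    exact Real.rpow_nonneg (by linarith [hx.2]) _

lemma betaFin (u v c : ℝ) (hu : -1 < u) (hu0 : u ≤ 0) (hv : -1 < v) (hv0 : v ≤ 0)
    (hc : 0 < c) :
    ∫⁻ x in Ioo (0:ℝ) c, ENNReal.ofReal (x ^ u * (c - x) ^ v) ≤
      ENNReal.ofReal ((c/2) ^ (u + v + 1) * (1/(u+1) + 1/(v+1))) := by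
  have hc2 : (0:ℝ) < c/2 := by linarith
  have hsplit : Ioo (0:ℝ) c = Ioo 0 (c/2) ∪ Ico (c/2) c := by
    rw [Ioo_union_Ico_eq_Ioo (by linarith) (by linarith)]
  have hIco : ∫⁻ x in Ico (c/2 : ℝ) c, ENNReal.ofReal (x ^ u * (c - x) ^ v) =
      ∫⁻ x in Ioo (c/2 : ℝ) c, ENNReal.ofReal (x ^ u * (c - x) ^ v) :=
    (setLIntegral_congr (Ioo_ae_eq_Ico (α := ℝ) (a := c/2) (b := c))).symm
  have hb1 : ∫⁻ x in Ioo (0:ℝ) (c/2), ENNReal.ofReal (x ^ u * (c - x) ^ v) ≤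
      ENNReal.ofReal ((c/2) ^ v * ((c/2) ^ (u+1) / (u+1))) := by
    calc ∫⁻ x in Ioo (0:ℝ) (c/2), ENNReal.ofReal (x ^ u * (c - x) ^ v)
        ≤ ∫⁻ x in Ioo (0:ℝ) (c/2), ENNReal.ofReal ((c/2) ^ v * x ^ u) := by
          apply setLIntegral_mono' measurableSet_Ioo
          intro x hx
          apply ENNReal.ofReal_le_ofReal
          rw [mul_comm ((c/2 : ℝ) ^ v)]
          exact mul_le_mul_of_nonneg_left
            (Real.rpow_le_rpow_of_nonpos hc2 (by linarith [hx.2]) hv0)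
            (Real.rpow_nonneg hx.1.le _)
      _ = ENNReal.ofReal ((c/2) ^ v) * ∫⁻ x in Ioo (0:ℝ) (c/2), ENNReal.ofReal (x ^ u) := by
          rw [← lintegral_const_mul' _ _ ENNReal.ofReal_ne_top]
          congr 1 with x
          rw [ENNReal.ofReal_mul (Real.rpow_nonneg hc2.le _)]
      _ = ENNReal.ofReal ((c/2) ^ v) * ENNReal.ofReal ((c/2) ^ (u+1) / (u+1)) := by
          rw [rpow_lint u (c/2) hu hc2]
      _ = ENNReal.ofReal ((c/2) ^ v * ((c/2) ^ (u+1) / (u+1))) := by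
          rw [← ENNReal.ofReal_mul (Real.rpow_nonneg hc2.le _)]
  have hb2 : ∫⁻ x in Ioo (c/2 : ℝ) c, ENNReal.ofReal (x ^ u * (c - x) ^ v) ≤
      ENNReal.ofReal ((c/2) ^ u * ((c/2) ^ (v+1) / (v+1))) := by
    calc ∫⁻ x in Ioo (c/2:ℝ) c, ENNReal.ofReal (x ^ u * (c - x) ^ v)
        ≤ ∫⁻ x in Ioo (c/2:ℝ) c, ENNReal.ofReal ((c/2) ^ u * (c - x) ^ v) := by
          apply setLIntegral_mono' measurableSet_Ioo
          intro x hx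
          apply ENNReal.ofReal_le_ofReal
          exact mul_le_mul_of_nonneg_right
            (Real.rpow_le_rpow_of_nonpos hc2 hx.1.le hu0)
            (Real.rpow_nonneg (by linarith [hx.2]) _)
      _ = ENNReal.ofReal ((c/2) ^ u) * ∫⁻ x in Ioo (c/2:ℝ) c, ENNReal.ofReal ((c - x) ^ v) := by
          rw [← lintegral_const_mul' _ _ ENNReal.ofReal_ne_top]
          congr 1 with x
          rw [ENNReal.ofReal_mul (Real.rpow_nonneg hc2.le _)]
      _ = ENNReal.ofReal ((c/2) ^ u) * ENNReal.ofReal ((c/2) ^ (v+1) / (v+1)) := by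
          rw [rpow_lint_rev v c hv hc]
      _ = ENNReal.ofReal ((c/2) ^ u * ((c/2) ^ (v+1) / (v+1))) := by
          rw [← ENNReal.ofReal_mul (Real.rpow_nonneg hc2.le _)]
  calc ∫⁻ x in Ioo (0:ℝ) c, ENNReal.ofReal (x ^ u * (c - x) ^ v)
      ≤ (∫⁻ x in Ioo (0:ℝ) (c/2), ENNReal.ofReal (x ^ u * (c - x) ^ v)) +
        ∫⁻ x in Ico (c/2:ℝ) c, ENNReal.ofReal (x ^ u * (c - x) ^ v) := by
        rw [hsplit]; exact lintegral_union_le _ _ _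
    _ ≤ ENNReal.ofReal ((c/2) ^ v * ((c/2) ^ (u+1) / (u+1))) +
        ENNReal.ofReal ((c/2) ^ u * ((c/2) ^ (v+1) / (v+1))) := by
        rw [hIco]; exact add_le_add hb1 hb2
    _ = ENNReal.ofReal ((c/2) ^ (u + v + 1) * (1/(u+1) + 1/(v+1))) := by
        rw [← ENNReal.ofReal_add
          (mul_nonneg (Real.rpow_nonneg hc2.le _)
            (div_nonneg (Real.rpow_nonneg hc2.le _) (by linarith)))
          (mul_nonneg (Real.rpow_nonneg hc2.le _)
            (div_nonneg (Real.rpow_nonneg hc2.le _) (by linarith)))]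
        congr 1
        have e1 : (c/2:ℝ) ^ (u + v + 1) = (c/2) ^ v * (c/2) ^ (u+1) := by
          rw [← Real.rpow_add hc2]; ring_nf
        have e2 : (c/2:ℝ) ^ (u + v + 1) = (c/2) ^ u * (c/2) ^ (v+1) := by
          rw [← Real.rpow_add hc2]; ring_nf
        rw [mul_add]
        nth_rewrite 1 [e1]
        rw [e2]; ring

/-- Double-integral estimate: under the stated exponent conditions,
`∫_0^t ∫_0^θ ((θ−θ')/(θθ'))^{2γ} θ^{2H−1−2γ} (t−θ)^{2H−1−2γ} |θ−θ'|^{−1−2β} dθ' dθ`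
is bounded by `C Γ(2H−2γ)Γ(2H−4γ−2β)/Γ(4H−6γ−2β) · t^{4H−6γ−2β−1} < ∞`. -/
theorem double_integral_bound (H T t γ β : ℝ) (hH : H ∈ Set.Ioo (0 : ℝ) (1 / 2))
    (hT : 0 < T) (ht : t ∈ Set.Ioc 0 T) (hγ : γ ∈ Set.Ioo 0 H)
    (hβ : β ∈ Set.Ioo (0 : ℝ) (1 / 2)) (hβγ : β < γ)
    (h1 : 4 * H - 6 * γ - 2 * β - 1 > -1) (h2 : 2 * H - 4 * γ - 2 * β > 0)
    (h3 : 2 * H - 2 * γ > 0) :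
    ∃ C > (0 : ℝ),
      (∫⁻ θ in Set.Ioo (0 : ℝ) t, ∫⁻ θ' in Set.Ioo (0 : ℝ) θ,
        ENNReal.ofReal (((θ - θ') / (θ * θ')) ^ (2 * γ) * θ ^ (2 * H - 1 - 2 * γ) *
          (t - θ) ^ (2 * H - 1 - 2 * γ) * |θ - θ'| ^ (-(1 + 2 * β)))) ≤
      ENNReal.ofReal (C *
        (Real.Gamma (2 * H - 2 * γ) * Real.Gamma (2 * H - 4 * γ - 2 * β) /
          Real.Gamma (4 * H - 6 * γ - 2 * β)) *
        t ^ (4 * H - 6 * γ - 2 * β - 1)) := by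
  obtain ⟨hH0, hH2⟩ := hH
  obtain ⟨ht0, htT⟩ := ht
  obtain ⟨hγ0, hγH⟩ := hγ
  obtain ⟨hβ0, hβ2⟩ := hβ
  have hγ2 : γ < 1/2 := lt_trans hγH hH2
  -- constants
  set K2 : ℝ := (1/(-(2*γ)+1) + 1/((2*γ-2*β-1)+1)) * 2 ^ (2*β) with hK2_def
  have hK2 : 0 < K2 := by
    apply mul_pos
    · exact add_pos (one_div_pos.mpr (by linarith)) (one_div_pos.mpr (by linarith))
    · exact Real.rpow_pos_of_pos two_pos _
  -- inner bound
  have inner_bound : ∀ θ ∈ Ioo (0:ℝ) t,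
      (∫⁻ θ' in Ioo (0:ℝ) θ,
        ENNReal.ofReal (((θ - θ') / (θ * θ')) ^ (2 * γ) * θ ^ (2 * H - 1 - 2 * γ) *
          (t - θ) ^ (2 * H - 1 - 2 * γ) * |θ - θ'| ^ (-(1 + 2 * β)))) ≤
      ENNReal.ofReal (K2 * (θ ^ (2*H-1-4*γ-2*β) * (t - θ) ^ (2*H-1-2*γ))) := by
    intro θ hθ
    have hθ0 : 0 < θ := hθ.1
    have hθt : θ < t := hθ.2
    have hM : 0 ≤ θ ^ (2*H-1-4*γ) * (t - θ) ^ (2*H-1-2*γ) :=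
      mul_nonneg (Real.rpow_nonneg hθ0.le _) (Real.rpow_nonneg (by linarith) _)
    have h_congr : (∫⁻ θ' in Ioo (0:ℝ) θ,
        ENNReal.ofReal (((θ - θ') / (θ * θ')) ^ (2 * γ) * θ ^ (2 * H - 1 - 2 * γ) *
          (t - θ) ^ (2 * H - 1 - 2 * γ) * |θ - θ'| ^ (-(1 + 2 * β)))) =
        ∫⁻ θ' in Ioo (0:ℝ) θ,
          ENNReal.ofReal ((θ ^ (2*H-1-4*γ) * (t - θ) ^ (2*H-1-2*γ)) *
            (θ' ^ (-(2*γ)) * (θ - θ') ^ (2*γ-2*β-1))) := by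
      apply setLIntegral_congr_fun measurableSet_Ioo
      intro θ' hθ'
      beta_reduce
      have h1 : 0 < θ' := hθ'.1
      have h2' : 0 < θ - θ' := by linarith [hθ'.2]
      congr 1
      have e3 : (θ-θ') ^ (2*γ) * (θ-θ') ^ (-(1+2*β)) = (θ-θ') ^ (2*γ-2*β-1) := by
        rw [← Real.rpow_add h2']; congr 1; ring
      have e4 : θ ^ (2*H-1-4*γ) = θ ^ (2*H-1-2*γ) * (θ ^ (2*γ))⁻¹ := by
        rw [← Real.rpow_neg hθ0.le, ← Real.rpow_add hθ0]; congr 1; ring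
      rw [abs_of_pos h2', Real.div_rpow h2'.le (mul_pos hθ0 h1).le,
        Real.mul_rpow hθ0.le h1.le, Real.rpow_neg h1.le, ← e3, e4]
      have hne1 : θ ^ (2*γ) ≠ 0 := ne_of_gt (Real.rpow_pos_of_pos hθ0 _)
      have hne2 : θ' ^ (2*γ) ≠ 0 := ne_of_gt (Real.rpow_pos_of_pos h1 _)
      field_simp
    rw [h_congr]
    calc ∫⁻ θ' in Ioo (0:ℝ) θ,
          ENNReal.ofReal ((θ ^ (2*H-1-4*γ) * (t - θ) ^ (2*H-1-2*γ)) *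
            (θ' ^ (-(2*γ)) * (θ - θ') ^ (2*γ-2*β-1)))
        = ENNReal.ofReal (θ ^ (2*H-1-4*γ) * (t - θ) ^ (2*H-1-2*γ)) *
          ∫⁻ θ' in Ioo (0:ℝ) θ, ENNReal.ofReal (θ' ^ (-(2*γ)) * (θ - θ') ^ (2*γ-2*β-1)) := by
          rw [← lintegral_const_mul' _ _ ENNReal.ofReal_ne_top]
          congr 1 with θ'
          rw [ENNReal.ofReal_mul hM]
      _ ≤ ENNReal.ofReal (θ ^ (2*H-1-4*γ) * (t - θ) ^ (2*H-1-2*γ)) *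
          ENNReal.ofReal ((θ/2) ^ (-(2*γ) + (2*γ-2*β-1) + 1) *
            (1/(-(2*γ)+1) + 1/((2*γ-2*β-1)+1))) := by
          refine mul_le_mul_right ?_ _
          exact betaFin (-(2*γ)) (2*γ-2*β-1) θ (by linarith) (by linarith)
            (by linarith) (by linarith) hθ0
      _ = ENNReal.ofReal (K2 * (θ ^ (2*H-1-4*γ-2*β) * (t - θ) ^ (2*H-1-2*γ))) := by
          rw [← ENNReal.ofReal_mul hM]
          congr 1
          have he : -(2*γ) + (2*γ-2*β-1) + 1 = -(2*β) := by ring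
          rw [he, Real.div_rpow hθ0.le (by norm_num : (0:ℝ) ≤ 2)]
          have e5 : θ ^ (2*H-1-4*γ-2*β) = θ ^ (2*H-1-4*γ) * θ ^ (-(2*β)) := by
            rw [← Real.rpow_add hθ0]
            congr 1
            try ring
          have e6 : ((2:ℝ) ^ (-(2*β)))⁻¹ = (2:ℝ) ^ (2*β) := by
            rw [Real.rpow_neg (by norm_num : (0:ℝ) ≤ 2), inv_inv]
          have h2ne : ((2:ℝ) ^ (-(2*β))) ≠ 0 := ne_of_gt (Real.rpow_pos_of_pos two_pos _)
          rw [hK2_def, e5]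
          field_simp
          rw [← e6]
          field_simp
  -- outer bound
  set R : ℝ := K2 * ((t/2) ^ ((2*H-1-4*γ-2*β) + (2*H-1-2*γ) + 1) *
    (1/((2*H-1-4*γ-2*β)+1) + 1/((2*H-1-2*γ)+1))) with hR_def
  have hR : 0 ≤ R := by
    apply mul_nonneg hK2.le
    apply mul_nonneg (Real.rpow_nonneg (by linarith) _)
    have : (0:ℝ) < (2*H-1-4*γ-2*β)+1 := by linarith
    have : (0:ℝ) < (2*H-1-2*γ)+1 := by linarith
    positivity
  have houter : (∫⁻ θ in Set.Ioo (0 : ℝ) t, ∫⁻ θ' in Set.Ioo (0 : ℝ) θ,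
        ENNReal.ofReal (((θ - θ') / (θ * θ')) ^ (2 * γ) * θ ^ (2 * H - 1 - 2 * γ) *
          (t - θ) ^ (2 * H - 1 - 2 * γ) * |θ - θ'| ^ (-(1 + 2 * β)))) ≤
      ENNReal.ofReal R := by
    calc (∫⁻ θ in Set.Ioo (0 : ℝ) t, ∫⁻ θ' in Set.Ioo (0 : ℝ) θ,
        ENNReal.ofReal (((θ - θ') / (θ * θ')) ^ (2 * γ) * θ ^ (2 * H - 1 - 2 * γ) *
          (t - θ) ^ (2 * H - 1 - 2 * γ) * |θ - θ'| ^ (-(1 + 2 * β))))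
        ≤ ∫⁻ θ in Set.Ioo (0 : ℝ) t,
            ENNReal.ofReal (K2 * (θ ^ (2*H-1-4*γ-2*β) * (t - θ) ^ (2*H-1-2*γ))) :=
          setLIntegral_mono' measurableSet_Ioo inner_bound
      _ = ENNReal.ofReal K2 * ∫⁻ θ in Set.Ioo (0 : ℝ) t,
            ENNReal.ofReal (θ ^ (2*H-1-4*γ-2*β) * (t - θ) ^ (2*H-1-2*γ)) := by
          rw [← lintegral_const_mul' _ _ ENNReal.ofReal_ne_top]
          congr 1 with θ
          rw [ENNReal.ofReal_mul hK2.le]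
      _ ≤ ENNReal.ofReal K2 * ENNReal.ofReal ((t/2) ^ ((2*H-1-4*γ-2*β) + (2*H-1-2*γ) + 1) *
            (1/((2*H-1-4*γ-2*β)+1) + 1/((2*H-1-2*γ)+1))) := by
          refine mul_le_mul_right ?_ _
          exact betaFin (2*H-1-4*γ-2*β) (2*H-1-2*γ) t (by linarith) (by linarith)
            (by linarith) (by linarith) ht0
      _ = ENNReal.ofReal R := by rw [← ENNReal.ofReal_mul hK2.le]
  -- conclude
  set D : ℝ := Real.Gamma (2 * H - 2 * γ) * Real.Gamma (2 * H - 4 * γ - 2 * β) /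
      Real.Gamma (4 * H - 6 * γ - 2 * β) * t ^ (4 * H - 6 * γ - 2 * β - 1) with hD_def
  have hD : 0 < D := by
    apply mul_pos
    · exact div_pos (mul_pos (Real.Gamma_pos_of_pos (by linarith))
        (Real.Gamma_pos_of_pos (by linarith))) (Real.Gamma_pos_of_pos (by linarith))
    · exact Real.rpow_pos_of_pos ht0 _
  refine ⟨R/D + 1, by positivity, ?_⟩
  refine le_trans houter (ENNReal.ofReal_le_ofReal ?_)
  rw [mul_assoc, ← hD_def]
  rw [add_mul, div_mul_cancel₀ _ hD.ne', one_mul]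
  linarith
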